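/- Let F_q be a finite field of characteristic p, let n be an odd prime different from p with p ∤ k*, where k* is the integer nearest to n/4 (k* = k if n = 4k + 1 and k* = k + 1 if n = 4k + 3). Set F = Σ_{i ∈ NR(n)} X^i, where NR(n) ⊆ {1, …, n−1} is the set of quadratic nonresidues modulo n, regarded in R = F_q[X]/(X^n − 1). Then for every D ∈ F_q[X] divisible by X − 1 and all integers N, M ≥ 1: D^N·F ≡ D^M·F (mod X^n − 1) if and only if D^N·g ≡ D^M·g (mod X^n − 1) for every g ∈ R. -/

import Mathlib

open Polynomial Finset
open scoped Classical

private lemma count_sum (n : ℕ) [Fact n.Prime] (hn2 : n ≠ 2) {t : ZMod n} (ht : t ≠ 0) :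
    (4 : ℤ) * ((Finset.univ.filter fun b : ZMod n =>
        (IsSquare b ∧ b ≠ 0) ∧ ¬ IsSquare (t - b)).card : ℤ)
      = (n : ℤ) - 2 + quadraticChar (ZMod n) (-1) := by
  set χ := quadraticChar (ZMod n) with hχ
  have hchar : ringChar (ZMod n) ≠ 2 := by rw [ZMod.ringChar_zmod_n]; exact hn2
  have hχ1 : χ ≠ 1 := quadraticChar_ne_one hchar
  have hsum0 : ∑ b : ZMod n, χ b = 0 := quadraticChar_sum_zero hchar
  have hsum1 : ∑ b : ZMod n, χ (t - b) = 0 := by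
    rw [← hsum0]
    exact Fintype.sum_equiv (Equiv.subLeft t) _ _ (fun b => rfl)
  have hJ : ∑ b : ZMod n, χ b * χ (t - b) = -χ (-1) := by
    have hsub : ∑ b : ZMod n, χ b * χ (t - b) = ∑ x : ZMod n, χ (t * x) * χ (t - t * x) :=
      (Fintype.sum_equiv (Equiv.mulLeft₀ t ht) _ _ (fun x => rfl)).symm
    have heq : ∀ x : ZMod n, χ (t * x) * χ (t - t * x) = χ x * χ (1 - x) := by
      intro x
      have h3 : t - t * x = t * (1 - x) := by ring
      have h2 : χ t * χ t = 1 := by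
        have := quadraticChar_sq_one (F := ZMod n) ht
        rwa [sq] at this
      rw [h3, map_mul, map_mul]
      calc χ t * χ x * (χ t * χ (1 - x)) = χ t * χ t * (χ x * χ (1 - x)) := by ring
        _ = χ x * χ (1 - x) := by rw [h2, one_mul]
    rw [hsub, Fintype.sum_congr _ _ heq]
    have : ∑ x : ZMod n, χ x * χ (1 - x) = jacobiSum χ χ := rfl
    have hinv : χ⁻¹ = χ := (quadraticChar_isQuadratic (ZMod n)).inv
    rw [this]
    calc jacobiSum χ χ = jacobiSum χ χ⁻¹ := by rw [hinv]
      _ = -χ (-1) := jacobiSum_nontrivial_inv hχ1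
  -- pointwise identity
  have hpt : ∀ b : ZMod n,
      (if (IsSquare b ∧ b ≠ 0) ∧ ¬ IsSquare (t - b) then (4 : ℤ) else 0)
        = (1 + χ b) * (1 - χ (t - b))
          - (if b = 0 then 1 - χ t else 0) - (if b = t then 1 + χ t else 0) := by
    intro b
    by_cases hb0 : b = 0
    · subst hb0
      have h0sq : IsSquare (0 : ZMod n) := ⟨0, by ring⟩
      rw [if_neg (by tauto), if_pos rfl, if_neg (Ne.symm ht)]
      simp only [hχ, quadraticChar_zero, sub_zero]
      ring
    · by_cases hbt : b = t
      · subst hbt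
        have h0sq : IsSquare (0 : ZMod n) := ⟨0, by ring⟩
        rw [if_neg (by simp [h0sq]), if_neg hb0, if_pos rfl]
        simp only [hχ, sub_self, quadraticChar_zero]
        ring
      · have htb0 : t - b ≠ 0 := fun h => hbt (by linear_combination -h)
        rw [if_neg hb0, if_neg hbt]
        by_cases hsb : IsSquare b
        · have h1 : χ b = 1 := (quadraticChar_one_iff_isSquare hb0).2 hsb
          by_cases hstb : IsSquare (t - b)
          · have h2 : χ (t - b) = 1 := (quadraticChar_one_iff_isSquare htb0).2 hstb
            rw [if_neg (by tauto), h1, h2]; ring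
          · have h2 : χ (t - b) = -1 := quadraticChar_neg_one_iff_not_isSquare.2 hstb
            rw [if_pos ⟨⟨hsb, hb0⟩, hstb⟩, h1, h2]; ring
        · have h1 : χ b = -1 := quadraticChar_neg_one_iff_not_isSquare.2 hsb
          rw [if_neg (by tauto), h1]
          ring
  have hcard : ((Finset.univ.filter fun b : ZMod n =>
      (IsSquare b ∧ b ≠ 0) ∧ ¬ IsSquare (t - b)).card : ℤ)
      = ∑ b : ZMod n, (if (IsSquare b ∧ b ≠ 0) ∧ ¬ IsSquare (t - b) then (1 : ℤ) else 0) := by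
    simp [Finset.sum_boole]
  rw [hcard, Finset.mul_sum]
  have : ∀ b : ZMod n, (4 : ℤ) * (if (IsSquare b ∧ b ≠ 0) ∧ ¬ IsSquare (t - b) then (1:ℤ) else 0)
      = (if (IsSquare b ∧ b ≠ 0) ∧ ¬ IsSquare (t - b) then (4 : ℤ) else 0) := by
    intro b; split <;> ring
  rw [Fintype.sum_congr _ _ this, Fintype.sum_congr _ _ hpt]
  have hcn : ∑ b : ZMod n, (1 : ℤ) = n := by
    rw [Finset.sum_const]; simp [ZMod.card n]
  simp only [sub_sub]
  rw [Finset.sum_sub_distrib]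
  have hexp : ∑ b : ZMod n, (1 + χ b) * (1 - χ (t - b))
      = ∑ b : ZMod n, ((1 : ℤ) + χ b - χ (t - b) - χ b * χ (t - b)) := by
    apply Fintype.sum_congr; intro b; ring
  rw [hexp]
  simp only [Finset.sum_sub_distrib, Finset.sum_add_distrib, hsum0, hsum1, hJ, hcn,
    Finset.sum_ite_eq' , Finset.sum_add_distrib]
  simp only [Finset.mem_univ, if_true]
  ring

-- pair count equals b-count, for every t
private lemma pair_card (n : ℕ) [NeZero n] (t : ZMod n) :
    ((((Finset.univ.filter fun a : ZMod n => ¬ IsSquare a)) ×ˢ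
      (Finset.univ.filter fun b : ZMod n => IsSquare b ∧ b ≠ 0)).filter
        fun p => p.1 + p.2 = t).card
    = (Finset.univ.filter fun b : ZMod n => (IsSquare b ∧ b ≠ 0) ∧ ¬ IsSquare (t - b)).card := by
  apply Finset.card_nbij' (fun p => p.2) (fun b => (t - b, b))
  · intro p hp
    simp only [Finset.mem_coe, Finset.mem_filter, Finset.mem_product, Finset.mem_univ, true_and] at hp ⊢
    obtain ⟨⟨ha, hb⟩, hsum⟩ := hp
    have : t - p.2 = p.1 := by linear_combination -hsum
    exact ⟨hb, by rwa [this]⟩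
  · intro b hb
    simp only [Finset.mem_coe, Finset.mem_filter, Finset.mem_product, Finset.mem_univ, true_and] at hb ⊢
    exact ⟨⟨hb.2, hb.1⟩, by ring⟩
  · intro p hp
    simp only [Finset.mem_coe, Finset.mem_filter, Finset.mem_product, Finset.mem_univ, true_and] at hp
    have : t - p.2 = p.1 := by linear_combination -hp.2
    show (t - p.2, p.2) = p
    rw [this]
  · intro b hb
    rfl

-- card of nonzero squares
private lemma cardB (n : ℕ) [Fact n.Prime] (hn2 : n ≠ 2) :
    2 * (Finset.univ.filter fun b : ZMod n => IsSquare b ∧ b ≠ 0).card + 1 = n := by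
  set χ := quadraticChar (ZMod n) with hχ
  have hchar : ringChar (ZMod n) ≠ 2 := by rw [ZMod.ringChar_zmod_n]; exact hn2
  have hsum0 : ∑ b : ZMod n, χ b = 0 := quadraticChar_sum_zero hchar
  have hB : ((Finset.univ.filter fun b : ZMod n => IsSquare b ∧ b ≠ 0).card : ℤ)
      = ∑ b : ZMod n, (if IsSquare b ∧ b ≠ 0 then (1:ℤ) else 0) :=
    (Finset.sum_boole _ _).symm
  have hA : ((Finset.univ.filter fun b : ZMod n => ¬ IsSquare b).card : ℤ)
      = ∑ b : ZMod n, (if ¬ IsSquare b then (1:ℤ) else 0) :=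
    (Finset.sum_boole _ _).symm
  have hdiff : ((Finset.univ.filter fun b : ZMod n => IsSquare b ∧ b ≠ 0).card : ℤ)
      - ((Finset.univ.filter fun b : ZMod n => ¬ IsSquare b).card : ℤ) = 0 := by
    rw [hA, hB, ← Finset.sum_sub_distrib]
    have hpt : ∀ b : ZMod n, ((if IsSquare b ∧ b ≠ 0 then (1:ℤ) else 0)
        - (if ¬ IsSquare b then (1:ℤ) else 0)) = χ b := by
      intro b
      by_cases hb0 : b = 0
      · subst hb0
        have h0sq : IsSquare (0 : ZMod n) := ⟨0, by ring⟩
        rw [if_neg (by tauto), if_neg (by tauto)]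
        simp [hχ]
      · by_cases hsb : IsSquare b
        · rw [if_pos ⟨hsb, hb0⟩, if_neg (by tauto),
            hχ, (quadraticChar_one_iff_isSquare hb0).2 hsb]
          ring
        · rw [if_neg (by tauto), if_pos hsb,
            hχ, quadraticChar_neg_one_iff_not_isSquare.2 hsb]
          ring
    rw [Fintype.sum_congr _ _ hpt, hsum0]
  have hplus : ((Finset.univ.filter fun b : ZMod n => IsSquare b ∧ b ≠ 0).card : ℤ)
      + ((Finset.univ.filter fun b : ZMod n => ¬ IsSquare b).card : ℤ) = n - 1 := by
    rw [hA, hB, ← Finset.sum_add_distrib]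
    have hpt : ∀ b : ZMod n, ((if IsSquare b ∧ b ≠ 0 then (1:ℤ) else 0)
        + (if ¬ IsSquare b then (1:ℤ) else 0)) = 1 - (if b = 0 then 1 else 0) := by
      intro b
      by_cases hb0 : b = 0
      · subst hb0
        have h0sq : IsSquare (0 : ZMod n) := ⟨0, by ring⟩
        rw [if_neg (by tauto), if_neg (by tauto), if_pos rfl]; ring
      · by_cases hsb : IsSquare b
        · rw [if_pos ⟨hsb, hb0⟩, if_neg (by tauto), if_neg hb0]; ring
        · rw [if_neg (by tauto), if_pos hsb, if_neg hb0]; ring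
    rw [Fintype.sum_congr _ _ hpt, Finset.sum_sub_distrib]
    have h1 : ∑ _b : ZMod n, (1 : ℤ) = n := by simp [ZMod.card n]
    have h2 : ∑ b : ZMod n, (if b = 0 then (1:ℤ) else 0) = 1 := by
      rw [Finset.sum_ite_eq' Finset.univ (0 : ZMod n) (fun _ => (1:ℤ))]
      simp
    rw [h1, h2]
  omega

private lemma chiNegOne {n : ℕ} [Fact n.Prime] :
    (n % 4 = 1 → quadraticChar (ZMod n) (-1) = 1) ∧
    (n % 4 = 3 → quadraticChar (ZMod n) (-1) = -1) := by
  have hp : n.Prime := Fact.out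
  have hcard : Fintype.card (ZMod n) = n := ZMod.card n
  have hne : (-1 : ZMod n) ≠ 0 := by
    simp only [ne_eq, neg_eq_zero, one_ne_zero, not_false_iff]
  constructor
  · intro h4
    rw [quadraticChar_one_iff_isSquare hne, FiniteField.isSquare_neg_one_iff, hcard]
    omega
  · intro h4
    rw [quadraticChar_neg_one_iff_not_isSquare, FiniteField.isSquare_neg_one_iff, hcard]
    omega

private lemma Nt_val (n : ℕ) [Fact n.Prime] (hn2 : n ≠ 2) {t : ZMod n} (ht : t ≠ 0) :
    (Finset.univ.filter fun b : ZMod n =>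
      (IsSquare b ∧ b ≠ 0) ∧ ¬ IsSquare (t - b)).card = n / 4 := by
  have hp : n.Prime := Fact.out
  have h4 := count_sum n hn2 ht
  have hodd : n % 2 = 1 := Nat.odd_iff.1 (hp.odd_of_ne_two hn2)
  have h14 : n % 4 = 1 ∨ n % 4 = 3 := by omega
  rcases h14 with h14 | h14
  · rw [chiNegOne.1 h14] at h4; omega
  · rw [chiNegOne.2 h14] at h4; omega

private lemma zeta_sum_zero {K : Type*} [Field K] (n : ℕ) [NeZero n]
    {ζ : K} (hζn : ζ ^ n = 1) (hζ1 : ζ ≠ 1) :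
    ∑ t : ZMod n, ζ ^ t.val = 0 := by
  have hgs : (∑ j ∈ Finset.range n, ζ ^ j) * (ζ - 1) = 0 := by
    rw [geom_sum_mul, hζn, sub_self]
  have hg0 : ∑ j ∈ Finset.range n, ζ ^ j = 0 := by
    rcases mul_eq_zero.1 hgs with h | h
    · exact h
    · exact absurd (sub_eq_zero.1 h) hζ1
  rw [← hg0]
  apply Finset.sum_nbij' (fun t : ZMod n => t.val) (fun j : ℕ => (j : ZMod n))
  · intro a _; exact Finset.mem_range.2 (ZMod.val_lt a)
  · intro j _; exact Finset.mem_univ _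
  · intro a _; exact ZMod.natCast_rightInverse a
  · intro j hj; exact (ZMod.val_natCast n j).trans (Nat.mod_eq_of_lt (Finset.mem_range.1 hj))
  · intro a _; rfl

private lemma eta_prod {K : Type*} [Field K] (n : ℕ) [Fact n.Prime] (hn2 : n ≠ 2)
    {ζ : K} (hζn : ζ ^ n = 1) (hζ1 : ζ ≠ 1) :
    (∑ a ∈ Finset.univ.filter (fun a : ZMod n => ¬ IsSquare a), ζ ^ a.val) *
      (∑ b ∈ Finset.univ.filter (fun b : ZMod n => IsSquare b ∧ b ≠ 0), ζ ^ b.val)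
    = ((Finset.univ.filter fun b : ZMod n =>
        (IsSquare b ∧ b ≠ 0) ∧ ¬ IsSquare ((0:ZMod n) - b)).card : K) - ((n / 4 : ℕ) : K) := by
  haveI : NeZero n := ⟨(Fact.out : n.Prime).ne_zero⟩
  set ψ : AddChar (ZMod n) K := AddChar.zmodChar n hζn with hψ
  have hψa : ∀ a : ZMod n, ψ a = ζ ^ a.val := fun a => AddChar.zmodChar_apply hζn a
  set A := Finset.univ.filter (fun a : ZMod n => ¬ IsSquare a) with hA
  set B := Finset.univ.filter (fun b : ZMod n => IsSquare b ∧ b ≠ 0) with hB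
  have step1 : (∑ a ∈ A, ζ ^ a.val) * (∑ b ∈ B, ζ ^ b.val)
      = ∑ p ∈ A ×ˢ B, ψ (p.1 + p.2) := by
    rw [Finset.sum_mul_sum, ← Finset.sum_product']
    apply Finset.sum_congr rfl
    intro p _
    rw [AddChar.map_add_eq_mul, hψa, hψa]
  rw [step1, ← Finset.sum_fiberwise (A ×ˢ B) (fun p => p.1 + p.2) (fun p => ψ (p.1 + p.2))]
  have step2 : ∀ t : ZMod n, ∑ p ∈ (A ×ˢ B).filter (fun p => p.1 + p.2 = t), ψ (p.1 + p.2)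
      = (((A ×ˢ B).filter (fun p => p.1 + p.2 = t)).card : K) * ψ t := by
    intro t
    rw [Finset.sum_congr rfl (fun p hp => by
      rw [(Finset.mem_filter.1 hp).2]), Finset.sum_const, nsmul_eq_mul]
  rw [Fintype.sum_congr _ _ step2]
  -- rewrite cards using pair_card
  have step3 : ∀ t : ZMod n, (((A ×ˢ B).filter (fun p => p.1 + p.2 = t)).card : K)
      = ((Finset.univ.filter fun b : ZMod n =>
          (IsSquare b ∧ b ≠ 0) ∧ ¬ IsSquare (t - b)).card : K) := by
    intro t; rw [pair_card n t]
  rw [Fintype.sum_congr _ _ (fun t => by rw [step3 t])]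
  rw [Finset.sum_eq_add_sum_sdiff_singleton_of_mem (Finset.mem_univ (0 : ZMod n))]
  have hψ0 : ψ 0 = 1 := AddChar.map_zero_eq_one ψ
  rw [hψ0, mul_one]
  have step4 : ∑ t ∈ Finset.univ \ {(0 : ZMod n)},
      ((Finset.univ.filter fun b : ZMod n =>
          (IsSquare b ∧ b ≠ 0) ∧ ¬ IsSquare (t - b)).card : K) * ψ t
      = ((n / 4 : ℕ) : K) * ∑ t ∈ Finset.univ \ {(0 : ZMod n)}, ψ t := by
    rw [Finset.mul_sum]
    apply Finset.sum_congr rfl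
    intro t ht
    have ht0 : t ≠ 0 := by
      simpa using (Finset.mem_sdiff.1 ht).2
    rw [Nt_val n hn2 ht0]
  rw [step4]
  have step5 : ∑ t ∈ Finset.univ \ {(0 : ZMod n)}, ψ t = -1 := by
    have := zeta_sum_zero n hζn hζ1
    have hsplit : ∑ t : ZMod n, ψ t = ψ 0 + ∑ t ∈ Finset.univ \ {(0 : ZMod n)}, ψ t :=
      Finset.sum_eq_add_sum_sdiff_singleton_of_mem (Finset.mem_univ _) _
    have hall : ∑ t : ZMod n, ψ t = 0 := by
      rw [Fintype.sum_congr _ _ hψa]; exact this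
    rw [hall, hψ0] at hsplit
    linear_combination -hsplit
  rw [step5]
  ring

private lemma eta_ne_zero {K : Type*} [Field K] (p n k : ℕ) [Fact p.Prime] [CharP K p]
    [Fact n.Prime] (hn2 : n ≠ 2) (hnp : n ≠ p)
    (hk : (n % 4 = 1 ∧ k = n / 4) ∨ (n % 4 = 3 ∧ k = n / 4 + 1)) (hpk : ¬ p ∣ k)
    {ζ : K} (hζn : ζ ^ n = 1) (hζ1 : ζ ≠ 1) :
    (∑ a ∈ Finset.univ.filter (fun a : ZMod n => ¬ IsSquare a), ζ ^ a.val) ≠ 0 := by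
  intro h0
  have hprod := eta_prod n hn2 hζn hζ1
  rw [h0, zero_mul] at hprod
  have hcard : Fintype.card (ZMod n) = n := ZMod.card n
  rcases hk with ⟨h4, hkv⟩ | ⟨h4, hkv⟩
  · -- n % 4 = 1 : the N0 filter is empty
    have hm1 : IsSquare (-1 : ZMod n) := by
      rw [FiniteField.isSquare_neg_one_iff, hcard]; omega
    have hempty : (Finset.univ.filter fun b : ZMod n =>
        (IsSquare b ∧ b ≠ 0) ∧ ¬ IsSquare ((0:ZMod n) - b)) = ∅ := by
      apply Finset.filter_eq_empty_iff.2
      rintro b - ⟨⟨hsb, _⟩, hns⟩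
      apply hns
      rw [zero_sub, ← neg_one_mul]
      exact hm1.mul hsb
    rw [hempty] at hprod
    simp only [Finset.card_empty, Nat.cast_zero, zero_sub] at hprod
    have : ((n / 4 : ℕ) : K) = 0 := neg_eq_zero.1 hprod.symm
    rw [← hkv] at this
    exact hpk ((CharP.cast_eq_zero_iff K p k).1 this)
  · -- n % 4 = 3
    have hm1 : ¬ IsSquare (-1 : ZMod n) := by
      rw [FiniteField.isSquare_neg_one_iff, hcard]; omega
    have hfeq : (Finset.univ.filter fun b : ZMod n =>
        (IsSquare b ∧ b ≠ 0) ∧ ¬ IsSquare ((0:ZMod n) - b))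
        = Finset.univ.filter fun b : ZMod n => IsSquare b ∧ b ≠ 0 := by
      apply Finset.filter_congr
      rintro b -
      constructor
      · rintro ⟨hb, -⟩; exact hb
      · rintro ⟨hsb, hb0⟩
        refine ⟨⟨hsb, hb0⟩, fun hneg => hm1 ?_⟩
        have : ((0:ZMod n) - b) * b⁻¹ = -1 := by
          field_simp
          ring
        rw [← this]
        exact hneg.mul hsb.inv
    rw [hfeq] at hprod
    set m := (Finset.univ.filter fun b : ZMod n => IsSquare b ∧ b ≠ 0).card with hm
    have hmn : 2 * m + 1 = n := cardB n hn2
    have hle : n / 4 ≤ m := by omega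
    have : ((m - n / 4 : ℕ) : K) = 0 := by
      rw [Nat.cast_sub hle]
      linear_combination -hprod
    have hmk : m - n / 4 = k := by omega
    rw [hmk] at this
    exact hpk ((CharP.cast_eq_zero_iff K p k).1 this)

private lemma coprime_of_no_common_root {K : Type*} [Field K] [IsAlgClosed K] {f g : K[X]}
    (hf : f ≠ 0) (h : ∀ z : K, f.eval z = 0 → g.eval z ≠ 0) : IsCoprime f g := by
  classical
  rw [← EuclideanDomain.gcd_isUnit_iff]
  by_contra hu
  have hd1 : EuclideanDomain.gcd f g ∣ f := EuclideanDomain.gcd_dvd_left f g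
  have hd2 : EuclideanDomain.gcd f g ∣ g := EuclideanDomain.gcd_dvd_right f g
  have hdeg : (EuclideanDomain.gcd f g).degree ≠ 0 := by
    intro hdeg
    exact hu (Polynomial.isUnit_iff_degree_eq_zero.2 hdeg)
  obtain ⟨z, hz⟩ := IsAlgClosed.exists_root _ hdeg
  have hz' : (EuclideanDomain.gcd f g).eval z = 0 := hz
  have hzf : f.eval z = 0 := by
    obtain ⟨c, hc⟩ := hd1
    rw [hc, Polynomial.eval_mul, hz', zero_mul]
  have hzg : g.eval z = 0 := by
    obtain ⟨c, hc⟩ := hd2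
    rw [hc, Polynomial.eval_mul, hz', zero_mul]
  exact h z hzf hzg

private lemma key_dvd {F : Type*} [Field F] [Fintype F] (p n k : ℕ) [Fact p.Prime] [CharP F p]
    [Fact n.Prime] (hn2 : n ≠ 2) (hnp : n ≠ p)
    (hk : (n % 4 = 1 ∧ k = n / 4) ∨ (n % 4 = 3 ∧ k = n / 4 + 1)) (hpk : ¬ p ∣ k)
    (E : F[X]) (hE1 : (X - 1 : F[X]) ∣ E) (s : Finset ℕ)
    (hs : ∀ i : ℕ, i ∈ s ↔ (1 ≤ i ∧ i < n ∧ ¬ IsSquare ((i : ZMod n))))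
    (h : (X ^ n - 1 : F[X]) ∣ E * ∑ i ∈ s, X ^ i) :
    (X ^ n - 1 : F[X]) ∣ E := by
  have hn : n.Prime := Fact.out
  set K := AlgebraicClosure F
  set φ : F →+* K := algebraMap F K with hφ
  have hmonic : (X ^ n - 1 : F[X]).Monic := by
    have := monic_X_pow_sub_C (1 : F) hn.ne_zero
    simpa using this
  rw [← map_dvd_map φ φ.injective hmonic]
  have hmapXn : (X ^ n - 1 : F[X]).map φ = (X ^ n - 1 : K[X]) := by
    simp [Polynomial.map_sub, Polynomial.map_pow, Polynomial.map_one]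
  rw [hmapXn]
  set Fp : F[X] := ∑ i ∈ s, X ^ i with hFpdef
  have hdvdK : (X ^ n - 1 : K[X]) ∣ (E.map φ) * (Fp.map φ) := by
    rw [← Polynomial.map_mul, ← hmapXn]
    exact Polynomial.map_dvd (φ : F →+* K) h
  set C' : K[X] := ∑ i ∈ Finset.range n, (X : K[X]) ^ i with hC'
  have hfact : C' * (X - 1) = (X ^ n - 1 : K[X]) := geom_sum_mul (X : K[X]) n
  have hnK : ((n : ℕ) : K) ≠ 0 := by
    rw [Ne, CharP.cast_eq_zero_iff K p n]
    intro hpn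
    exact hnp ((Nat.prime_dvd_prime_iff_eq (Fact.out : p.Prime) hn).1 hpn).symm
  have hC'1 : C'.eval 1 = (n : K) := by
    simp [hC', Polynomial.eval_finset_sum]
  have hC'0 : C' ≠ 0 := fun h0 => hnK (by rw [← hC'1, h0, Polynomial.eval_zero])
  have hroot : ∀ z : K, C'.eval z = 0 → z ^ n = 1 ∧ z ≠ 1 := by
    intro z hz
    constructor
    · have := congrArg (Polynomial.eval z) hfact
      rw [Polynomial.eval_mul, hz, zero_mul] at this
      have h2 : Polynomial.eval z (X ^ n - 1 : K[X]) = z ^ n - 1 := by simp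
      rw [h2] at this
      linear_combination -this
    · intro hz1
      rw [hz1, hC'1] at hz
      exact hnK hz
  have hFpeval : ∀ z : K, z ^ n = 1 → z ≠ 1 → (Fp.map φ).eval z ≠ 0 := by
    intro z hzn hz1
    have heval : (Fp.map φ).eval z = ∑ i ∈ s, z ^ i := by
      rw [hFpdef]
      rw [Polynomial.map_sum]
      rw [Polynomial.eval_finset_sum]
      apply Finset.sum_congr rfl
      intro i _
      rw [Polynomial.map_pow, Polynomial.map_X, Polynomial.eval_pow, Polynomial.eval_X]
    rw [heval]
    have hbij : ∑ i ∈ s, z ^ i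
        = ∑ a ∈ Finset.univ.filter (fun a : ZMod n => ¬ IsSquare a), z ^ a.val := by
      haveI : NeZero n := ⟨hn.ne_zero⟩
      apply Finset.sum_nbij' (fun i : ℕ => (i : ZMod n)) (fun a : ZMod n => a.val)
      · intro i hi
        simp only [Finset.mem_filter, Finset.mem_univ, true_and]
        exact ((hs i).1 hi).2.2
      · intro a ha
        have hns : ¬ IsSquare a := by
          simpa using (Finset.mem_filter.1 ha).2
        have ha0 : a ≠ 0 := fun h0 => hns (h0 ▸ ⟨0, by ring⟩)
        have hval0 : a.val ≠ 0 := fun h0 => ha0 ((ZMod.val_eq_zero a).1 h0)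
        refine (hs a.val).2 ⟨by omega, ZMod.val_lt a, ?_⟩
        rw [ZMod.natCast_rightInverse a]
        exact hns
      · intro i hi
        exact ZMod.val_cast_of_lt ((hs i).1 hi).2.1
      · intro a _
        exact ZMod.natCast_rightInverse a
      · intro i hi
        rw [ZMod.val_cast_of_lt ((hs i).1 hi).2.1]
    rw [hbij]
    exact eta_ne_zero p n k hn2 hnp hk hpk hzn hz1
  have hcop1 : IsCoprime C' (Fp.map φ) := by
    apply coprime_of_no_common_root hC'0
    intro z hz
    obtain ⟨hzn, hz1⟩ := hroot z hz
    exact hFpeval z hzn hz1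
  have hcop2 : IsCoprime C' (X - 1 : K[X]) := by
    apply coprime_of_no_common_root hC'0
    intro z hz hz2
    obtain ⟨-, hz1⟩ := hroot z hz
    have : z = 1 := by
      have h3 : z - 1 = 0 := by simpa using hz2
      linear_combination h3
    exact hz1 this
  have hCdvd : C' ∣ (E.map φ) := by
    apply hcop1.dvd_of_dvd_mul_right
    exact dvd_trans ⟨X - 1, hfact.symm⟩ hdvdK
  have hX1dvd : (X - 1 : K[X]) ∣ E.map φ := by
    have := Polynomial.map_dvd (φ : F →+* K) hE1
    simpa using this
  rw [← hfact]
  exact hcop2.mul_dvd hCdvd hX1dvd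

set_option maxHeartbeats 1000000 in
/-- Theorem 2 combined with Lemma 1: for an odd prime `n ≠ p` with `p ∤ k*` (`k*` the
integer nearest to `n/4`), the quadratic-nonresidue indicator polynomial
`F = ∑_{i ∈ NR(n)} X^i` satisfies, for every differential operator `D` (divisible by
`X - 1`) and all `N, M ≥ 1`: `D^N F ≡ D^M F (mod X^n - 1)` iff
`D^N g ≡ D^M g (mod X^n - 1)` for every `g`. -/
theorem stmt16 {F : Type*} [Field F] [Fintype F] (p n k : ℕ) [Fact p.Prime] [CharP F p]
    (hn : n.Prime) (hn2 : n ≠ 2) (hnp : n ≠ p)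
    (hk : (n % 4 = 1 ∧ k = n / 4) ∨ (n % 4 = 3 ∧ k = n / 4 + 1))
    (hpk : ¬ p ∣ k) :
    ∀ D : F[X], (X - 1 : F[X]) ∣ D → ∀ N M : ℕ, 1 ≤ N → 1 ≤ M →
      ((Ideal.Quotient.mk (Ideal.span {(X ^ n - 1 : F[X])}))
          (D ^ N * ∑ i ∈ (Finset.Ico 1 n).filter
            (fun i : ℕ => ¬ IsSquare ((i : ZMod n))), X ^ i) =
        (Ideal.Quotient.mk (Ideal.span {(X ^ n - 1 : F[X])}))
          (D ^ M * ∑ i ∈ (Finset.Ico 1 n).filter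
            (fun i : ℕ => ¬ IsSquare ((i : ZMod n))), X ^ i) ↔
      ∀ g : F[X],
        (Ideal.Quotient.mk (Ideal.span {(X ^ n - 1 : F[X])})) (D ^ N * g) =
        (Ideal.Quotient.mk (Ideal.span {(X ^ n - 1 : F[X])})) (D ^ M * g)) := by
  haveI : Fact n.Prime := ⟨hn⟩
  intro D hD N M hN hM
  have hmk : ∀ a b : F[X],
      (Ideal.Quotient.mk (Ideal.span {(X ^ n - 1 : F[X])})) a
        = (Ideal.Quotient.mk (Ideal.span {(X ^ n - 1 : F[X])})) b
      ↔ (X ^ n - 1 : F[X]) ∣ (a - b) := by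
    intro a b
    rw [Ideal.Quotient.eq, Ideal.mem_span_singleton]
  have hE1 : (X - 1 : F[X]) ∣ D ^ N - D ^ M := by
    have hDN : (X - 1 : F[X]) ∣ D ^ N := hD.trans (dvd_pow_self D (by omega))
    have hDM : (X - 1 : F[X]) ∣ D ^ M := hD.trans (dvd_pow_self D (by omega))
    exact dvd_sub hDN hDM
  constructor
  · intro h g
    rw [hmk] at h ⊢
    rw [← sub_mul] at h ⊢
    refine (key_dvd p n k hn2 hnp hk hpk (D ^ N - D ^ M) hE1 _ ?_ h).mul_right g
    intro i
    simp only [Finset.mem_filter, Finset.mem_Ico]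
    tauto
  · intro h
    exact h _
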